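/- Let s > 0 and let μ be a positive (finite) Borel measure on [0,1) satisfying μ([t,1)) ≤ C (1-t)^s for all t ∈ [0,1), for some constant C > 0. Then for every integer n ≥ 1, μ[n] ≤ C n B(n, 1+s) = C n Γ(n)Γ(1+s)/Γ(n+1+s), and consequently there is a constant C' > 0 (depending only on C and s) such that μ[n] ≤ C' (n+1)^{-s} for all integers n ≥ 0. -/

import Mathlib

open MeasureTheory

private lemma aux_beta (s : ℝ) (hs : 0 < s) (n : ℕ) (hn : 1 ≤ n) :
    (∫ t in Set.Ioo (0 : ℝ) 1, t ^ (n - 1) * (1 - t) ^ s) =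
      Real.Gamma n * Real.Gamma (1 + s) / Real.Gamma (n + 1 + s) := by
  have hG : Complex.Gamma (n:ℂ) * Complex.Gamma ((1+s:ℝ):ℂ) =
      Complex.Gamma ((n:ℂ) + ((1+s:ℝ):ℂ)) * Complex.betaIntegral (n:ℂ) ((1+s:ℝ):ℂ) :=
    Complex.Gamma_mul_Gamma_eq_betaIntegral (by simpa using (Nat.cast_pos (α := ℝ)).2 hn)
      (by simpa using by positivity)
  have hbeta : Complex.betaIntegral (n:ℂ) ((1+s:ℝ):ℂ) =
      ((∫ x in (0:ℝ)..1, x ^ (n-1) * (1-x) ^ s : ℝ) : ℂ) := by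
    rw [Complex.betaIntegral, ← intervalIntegral.integral_ofReal]
    refine intervalIntegral.integral_congr fun x hx => ?_
    rw [Set.uIcc_of_le (by norm_num : (0:ℝ) ≤ 1)] at hx
    have h1 : ((n:ℂ) - 1) = ((n - 1 : ℕ) : ℂ) := by
      push_cast [Nat.cast_sub hn]; ring
    have h2 : ((1+s:ℝ):ℂ) - 1 = ((s:ℝ):ℂ) := by push_cast; ring
    rw [h1, h2, Complex.cpow_natCast, Complex.ofReal_mul, Complex.ofReal_pow,
      Complex.ofReal_cpow (by linarith [hx.2]), Complex.ofReal_sub, Complex.ofReal_one]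
  rw [hbeta] at hG
  have hG2 : Complex.Gamma ((n:ℂ) + ((1+s:ℝ):ℂ)) = ((Real.Gamma (n+1+s) : ℝ) : ℂ) := by
    rw [← Complex.Gamma_ofReal]; push_cast; ring_nf
  have hn' : (n:ℂ) = ((n:ℝ):ℂ) := by push_cast; ring
  rw [hG2, hn', Complex.Gamma_ofReal, Complex.Gamma_ofReal, ← Complex.ofReal_mul,
    ← Complex.ofReal_mul] at hG
  have hR : Real.Gamma n * Real.Gamma (1+s) =
      Real.Gamma (n+1+s) * ∫ x in (0:ℝ)..1, x ^ (n-1) * (1-x) ^ s := by exact_mod_cast hG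
  have hpos : 0 < Real.Gamma ((n:ℝ)+1+s) := Real.Gamma_pos_of_pos (by positivity)
  have : (∫ x in (0:ℝ)..1, x ^ (n-1) * (1-x) ^ s) =
      ∫ t in Set.Ioo (0 : ℝ) 1, t ^ (n - 1) * (1 - t) ^ s := by
    rw [intervalIntegral.integral_of_le (by norm_num : (0:ℝ) ≤ 1),
      MeasureTheory.integral_Ioc_eq_integral_Ioo]
  rw [this] at hR
  field_simp
  linarith [hR]

private lemma aux_cov (s : ℝ) (hs : 0 < s) (n : ℕ) (hn : 1 ≤ n) :
    (∫ l in Set.Ioo (0:ℝ) 1, (1 - l ^ ((n:ℝ))⁻¹) ^ s) =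
      n * ∫ u in Set.Ioo (0:ℝ) 1, u ^ (n-1) * (1-u) ^ s := by
  have hn0 : (0:ℝ) < n := by exact_mod_cast hn
  have hg : Continuous (fun l : ℝ => (1 - l ^ ((n:ℝ))⁻¹) ^ s) :=
    (Real.continuous_rpow_const hs.le).comp
      (continuous_const.sub (Real.continuous_rpow_const (by positivity)))
  have key : (∫ x in (0:ℝ)..1, ((n:ℝ) * x ^ (n-1)) •
        ((fun l : ℝ => (1 - l ^ ((n:ℝ))⁻¹) ^ s) ∘ (fun x : ℝ => x ^ n)) x) =
      ∫ l in ((0:ℝ)^n)..((1:ℝ)^n), (1 - l ^ ((n:ℝ))⁻¹) ^ s :=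
    intervalIntegral.integral_comp_smul_deriv
      (f := fun x : ℝ => x ^ n) (f' := fun x : ℝ => (n:ℝ) * x ^ (n-1))
      (g := fun l : ℝ => (1 - l ^ ((n:ℝ))⁻¹) ^ s) (a := 0) (b := 1)
      (fun x _ => hasDerivAt_pow n x) (by fun_prop) hg
  have congr1 : (∫ x in (0:ℝ)..1, ((n:ℝ) * x ^ (n-1)) •
        ((fun l : ℝ => (1 - l ^ ((n:ℝ))⁻¹) ^ s) ∘ (fun x : ℝ => x ^ n)) x) =
      ∫ x in (0:ℝ)..1, (n:ℝ) * (x ^ (n-1) * (1-x) ^ s) := by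
    refine intervalIntegral.integral_congr fun x hx => ?_
    rw [Set.uIcc_of_le (by norm_num : (0:ℝ) ≤ 1)] at hx
    have hx0 : (0:ℝ) ≤ x := hx.1
    have : (x ^ n) ^ ((n:ℝ))⁻¹ = x := by
      rw [← Real.rpow_natCast x n, ← Real.rpow_mul hx0, mul_inv_cancel₀ (ne_of_gt hn0),
        Real.rpow_one]
    simp only [Function.comp, smul_eq_mul, this]
    ring
  have h2 : (∫ x in (0:ℝ)..1, (n:ℝ) * (x ^ (n-1) * (1-x) ^ s)) =
      (n:ℝ) * ∫ u in Set.Ioo (0:ℝ) 1, u ^ (n-1) * (1-u) ^ s := by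
    rw [intervalIntegral.integral_const_mul, intervalIntegral.integral_of_le
      (by norm_num : (0:ℝ) ≤ 1), MeasureTheory.integral_Ioc_eq_integral_Ioo]
  rw [congr1, h2, zero_pow (by omega : n ≠ 0), one_pow] at key
  rw [key, intervalIntegral.integral_of_le (by norm_num : (0:ℝ) ≤ 1),
    MeasureTheory.integral_Ioc_eq_integral_Ioo]

private lemma aux_layer (s : ℝ) (hs : 0 < s)
    (μ : Measure ℝ) [IsFiniteMeasure μ] (hμsupp : μ (Set.Ico (0 : ℝ) 1)ᶜ = 0)
    (C : ℝ) (hC : 0 < C)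
    (hcar : ∀ t ∈ Set.Ico (0 : ℝ) 1, (μ (Set.Ico t 1)).toReal ≤ C * (1 - t) ^ s)
    (n : ℕ) (hn : 1 ≤ n) :
    (∫ t in Set.Ico (0 : ℝ) 1, t ^ n ∂μ) ≤
      C * ∫ l in Set.Ioo (0:ℝ) 1, (1 - l ^ ((n:ℝ))⁻¹) ^ s := by
  have hn0 : (0:ℝ) < n := by exact_mod_cast hn
  set ν := μ.restrict (Set.Ico (0:ℝ) 1) with hν
  have hmem : ∀ᵐ a ∂ν, a ∈ Set.Ico (0:ℝ) 1 := ae_restrict_mem measurableSet_Ico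
  have f_nn : 0 ≤ᵐ[ν] fun a : ℝ => a ^ n := by
    filter_upwards [hmem] with a ha using pow_nonneg ha.1 n
  have f_int : Integrable (fun a : ℝ => a ^ n) ν := by
    refine Integrable.mono' (integrable_const 1) (Continuous.aestronglyMeasurable (by fun_prop)) ?_
    filter_upwards [hmem] with a ha
    rw [Real.norm_eq_abs, abs_of_nonneg (pow_nonneg ha.1 n)]
    exact pow_le_one₀ ha.1 ha.2.le
  have layer := f_int.integral_eq_integral_meas_lt f_nn
  -- the dominating function
  set G : ℝ → ℝ := Set.indicator (Set.Ioo (0:ℝ) 1) (fun l => C * (1 - l ^ ((n:ℝ))⁻¹) ^ s) with hGdef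
  have hgc : Continuous (fun l : ℝ => C * (1 - l ^ ((n:ℝ))⁻¹) ^ s) :=
    continuous_const.mul ((Real.continuous_rpow_const hs.le).comp
      (continuous_const.sub (Real.continuous_rpow_const (by positivity))))
  have G_int : Integrable G := by
    rw [hGdef, integrable_indicator_iff measurableSet_Ioo]
    exact (hgc.continuousOn.integrableOn_Icc).mono_set Set.Ioo_subset_Icc_self
  have hbound : ∀ l ∈ Set.Ioi (0:ℝ), (ν {a : ℝ | l < a ^ n}).toReal ≤ G l := by
    intro l hl
    have hrest : ∀ S : Set ℝ, ν S = μ (S ∩ Set.Ico (0:ℝ) 1) := fun S =>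
      Measure.restrict_apply' measurableSet_Ico
    by_cases hl1 : l < 1
    · have hl0 : (0:ℝ) < l := hl
      set t0 := l ^ ((n:ℝ))⁻¹ with ht0
      have ht0pos : 0 < t0 := Real.rpow_pos_of_pos hl0 _
      have ht0lt : t0 < 1 := Real.rpow_lt_one hl0.le hl1 (by positivity)
      have hsub : {a : ℝ | l < a ^ n} ∩ Set.Ico (0:ℝ) 1 ⊆ Set.Ico t0 1 := by
        rintro a ⟨hla, ha0, ha1⟩
        refine ⟨?_, ha1⟩
        have : t0 < a := by
          calc t0 = l ^ ((n:ℝ))⁻¹ := rfl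
          _ < (a ^ n) ^ ((n:ℝ))⁻¹ := Real.rpow_lt_rpow hl0.le hla (by positivity)
          _ = a := by
              rw [← Real.rpow_natCast a n, ← Real.rpow_mul ha0,
                mul_inv_cancel₀ (ne_of_gt hn0), Real.rpow_one]
        exact this.le
      have hle : ν {a : ℝ | l < a ^ n} ≤ μ (Set.Ico t0 1) := by
        rw [hrest]; exact measure_mono hsub
      have : (ν {a : ℝ | l < a ^ n}).toReal ≤ (μ (Set.Ico t0 1)).toReal :=
        ENNReal.toReal_mono (measure_ne_top μ _) hle
      refine this.trans ((hcar t0 (Set.mem_Ico.mpr ⟨ht0pos.le, ht0lt⟩)).trans_eq ?_)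
      rw [hGdef]
      rw [Set.indicator_of_mem (Set.mem_Ioo.mpr ⟨hl0, hl1⟩)]
    · have hempty : {a : ℝ | l < a ^ n} ∩ Set.Ico (0:ℝ) 1 = ∅ := by
        ext a
        simp only [Set.mem_inter_iff, Set.mem_setOf_eq, Set.mem_Ico, Set.mem_empty_iff_false,
          iff_false]
        rintro ⟨hla, ha0, ha1⟩
        have : a ^ n < 1 := pow_lt_one₀ ha0 ha1 (by omega)
        linarith [not_lt.mp hl1]
      have : ν {a : ℝ | l < a ^ n} = 0 := by rw [hrest, hempty, measure_empty]
      rw [this]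
      simp only [ENNReal.toReal_zero]
      rw [hGdef]
      by_cases h : l ∈ Set.Ioo (0:ℝ) 1
      · rw [Set.indicator_of_mem h]
        have : l ^ ((n:ℝ))⁻¹ ≤ 1 := Real.rpow_le_one h.1.le h.2.le (by positivity)
        have h1 : (0:ℝ) ≤ 1 - l ^ ((n:ℝ))⁻¹ := by linarith
        exact mul_nonneg hC.le (Real.rpow_nonneg h1 s)
      · rw [Set.indicator_of_notMem h]
  have step : (∫ l in Set.Ioi (0:ℝ), (ν {a : ℝ | l < a ^ n}).toReal) ≤
      ∫ l in Set.Ioi (0:ℝ), G l := by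
    refine integral_mono_of_nonneg (Filter.Eventually.of_forall fun l => ENNReal.toReal_nonneg)
      G_int.integrableOn ?_
    filter_upwards [ae_restrict_mem measurableSet_Ioi] with l hl using hbound l hl
  have hGval : (∫ l in Set.Ioi (0:ℝ), G l) =
      C * ∫ l in Set.Ioo (0:ℝ) 1, (1 - l ^ ((n:ℝ))⁻¹) ^ s := by
    rw [hGdef, setIntegral_indicator measurableSet_Ioo]
    have : Set.Ioi (0:ℝ) ∩ Set.Ioo 0 1 = Set.Ioo 0 1 := by
      ext x; simp only [Set.mem_inter_iff, Set.mem_Ioi, Set.mem_Ioo, and_iff_right_iff_imp]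
      exact fun h => h.1
    rw [this, integral_const_mul]
  calc (∫ t in Set.Ico (0 : ℝ) 1, t ^ n ∂μ) = ∫ a, a ^ n ∂ν := rfl
    _ = ∫ l in Set.Ioi (0:ℝ), (ν {a : ℝ | l < a ^ n}).toReal := layer
    _ ≤ ∫ l in Set.Ioi (0:ℝ), G l := step
    _ = C * ∫ l in Set.Ioo (0:ℝ) 1, (1 - l ^ ((n:ℝ))⁻¹) ^ s := hGval

private lemma aux_tail (s : ℝ) (hs : 0 < s) (n : ℕ) (hn : 2 ≤ n) :
    (∫ u in Set.Ioo (0:ℝ) 1, u ^ (n-1) * (1-u) ^ s) ≤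
      Real.Gamma (1+s) * ((n:ℝ)-1) ^ (-(1+s)) := by
  have hm : (2:ℝ) ≤ (n:ℝ) := by exact_mod_cast hn
  have hr : (0:ℝ) < (n:ℝ) - 1 := by linarith
  -- flip the variable
  have flip : (∫ u in Set.Ioo (0:ℝ) 1, u ^ (n-1) * (1-u) ^ s) =
      ∫ u in Set.Ioo (0:ℝ) 1, (1-u) ^ (n-1) * u ^ s := by
    rw [← MeasureTheory.integral_Ioc_eq_integral_Ioo,
        ← intervalIntegral.integral_of_le (by norm_num : (0:ℝ) ≤ 1)]
    rw [← MeasureTheory.integral_Ioc_eq_integral_Ioo,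
        ← intervalIntegral.integral_of_le (by norm_num : (0:ℝ) ≤ 1)]
    have := intervalIntegral.integral_comp_sub_left
      (fun t : ℝ => t ^ (n-1) * (1-t) ^ s) 1 (a := 0) (b := 1)
    simp only [sub_zero, sub_self] at this
    rw [← this]
    refine intervalIntegral.integral_congr fun x hx => ?_
    simp only [sub_sub_cancel]
  rw [flip]
  have H_int : IntegrableOn (fun u : ℝ => u ^ s * Real.exp (-((n:ℝ)-1) * u)) (Set.Ioi 0) := by
    have := integrableOn_rpow_mul_exp_neg_mul_rpow (s := s) (p := 1) (b := (n:ℝ)-1)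
      (by linarith) zero_lt_one hr
    simpa [Real.rpow_one] using this
  have step1 : (∫ u in Set.Ioo (0:ℝ) 1, (1-u) ^ (n-1) * u ^ s) ≤
      ∫ u in Set.Ioo (0:ℝ) 1, u ^ s * Real.exp (-((n:ℝ)-1) * u) := by
    refine setIntegral_mono_on ?_ (H_int.mono_set Set.Ioo_subset_Ioi_self)
      measurableSet_Ioo ?_
    · have hc : ContinuousOn (fun u : ℝ => (1-u) ^ (n-1) * u ^ s) (Set.Icc 0 1) :=
        ((continuous_const.sub continuous_id).pow _).continuousOn.mul
          (Real.continuous_rpow_const hs.le).continuousOn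
      exact hc.integrableOn_Icc.mono_set Set.Ioo_subset_Icc_self
    · intro u hu
      have h1 : (1-u) ^ (n-1) ≤ Real.exp (-((n:ℝ)-1) * u) := by
        have e1 : 1 - u ≤ Real.exp (-u) := by
          have := Real.add_one_le_exp (-u); linarith
        have e2 : (1-u) ^ (n-1) ≤ Real.exp (-u) ^ (n-1) :=
          pow_le_pow_left₀ (by linarith [hu.2]) e1 _
        refine e2.trans_eq ?_
        rw [← Real.exp_nat_mul]
        congr 1
        have : ((n-1 : ℕ) : ℝ) = (n:ℝ) - 1 := by
          push_cast [Nat.cast_sub (by omega : 1 ≤ n)]; ring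
        rw [this]; ring
      calc (1-u) ^ (n-1) * u ^ s ≤ Real.exp (-((n:ℝ)-1) * u) * u ^ s :=
            mul_le_mul_of_nonneg_right h1 (Real.rpow_nonneg hu.1.le s)
        _ = u ^ s * Real.exp (-((n:ℝ)-1) * u) := by ring
  have step2 : (∫ u in Set.Ioo (0:ℝ) 1, u ^ s * Real.exp (-((n:ℝ)-1) * u)) ≤
      ∫ u in Set.Ioi (0:ℝ), u ^ s * Real.exp (-((n:ℝ)-1) * u) := by
    refine setIntegral_mono_set H_int ?_
      (HasSubset.Subset.eventuallyLE Set.Ioo_subset_Ioi_self)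
    filter_upwards [ae_restrict_mem measurableSet_Ioi] with u hu
    have hu' : (0:ℝ) < u := hu
    positivity
  have hval : (∫ u in Set.Ioi (0:ℝ), u ^ s * Real.exp (-((n:ℝ)-1) * u)) =
      Real.Gamma (1+s) * ((n:ℝ)-1) ^ (-(1+s)) := by
    have h := Real.integral_rpow_mul_exp_neg_mul_Ioi (a := 1+s) (r := (n:ℝ)-1)
      (by linarith) hr
    simp only [add_sub_cancel_left, neg_mul] at h ⊢
    rw [h, one_div, Real.inv_rpow hr.le, ← Real.rpow_neg hr.le]
    ring
  exact (step1.trans step2).trans (le_of_eq hval)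


/-- If `μ` is a finite positive Borel measure on `[0,1)` with `μ([t,1)) ≤ C (1-t)^s` for all
`t ∈ [0,1)`, then for every `n ≥ 1`,
`μ[n] ≤ C n B(n, 1+s)` with `B(n, 1+s) = ∫₀¹ t^{n-1}(1-t)^s dt = Γ(n)Γ(1+s)/Γ(n+1+s)`,
and consequently `μ[n] ≤ C' (n+1)^{-s}` for all `n ≥ 0` and some `C' > 0`. -/
theorem carleson_moment_beta_bound (s : ℝ) (hs : 0 < s)
    (μ : Measure ℝ) [IsFiniteMeasure μ] (hμsupp : μ (Set.Ico (0 : ℝ) 1)ᶜ = 0)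
    (C : ℝ) (hC : 0 < C)
    (hcar : ∀ t ∈ Set.Ico (0 : ℝ) 1,
      (μ (Set.Ico t 1)).toReal ≤ C * (1 - t) ^ s) :
    (∀ n : ℕ, 1 ≤ n →
      (∫ t in Set.Ico (0 : ℝ) 1, t ^ n ∂μ) ≤
          C * n * ∫ t in Set.Ioo (0 : ℝ) 1, t ^ (n - 1) * (1 - t) ^ s ∧
      (∫ t in Set.Ioo (0 : ℝ) 1, t ^ (n - 1) * (1 - t) ^ s) =
        Real.Gamma n * Real.Gamma (1 + s) / Real.Gamma (n + 1 + s)) ∧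
    ∃ C' > (0 : ℝ), ∀ n : ℕ,
      (∫ t in Set.Ico (0 : ℝ) 1, t ^ n ∂μ) ≤ C' * ((n : ℝ) + 1) ^ (-s) := by
  have part1 : ∀ n : ℕ, 1 ≤ n →
      (∫ t in Set.Ico (0 : ℝ) 1, t ^ n ∂μ) ≤
        C * n * ∫ t in Set.Ioo (0 : ℝ) 1, t ^ (n - 1) * (1 - t) ^ s := by
    intro n hn
    have h := aux_layer s hs μ hμsupp C hC hcar n hn
    rw [aux_cov s hs n hn, ← mul_assoc] at h
    exact h
  refine ⟨fun n hn => ⟨part1 n hn, aux_beta s hs n hn⟩, ?_⟩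
  have hΓ : 0 < Real.Gamma (1+s) := Real.Gamma_pos_of_pos (by linarith)
  have h2s : (0:ℝ) < 2 ^ s := Real.rpow_pos_of_pos (by norm_num) s
  have h3s : (0:ℝ) < 3 ^ s := Real.rpow_pos_of_pos (by norm_num) s
  set C' : ℝ := C * (1 + 2 ^ s + 2 * 3 ^ s * Real.Gamma (1+s)) with hC'def
  have hC' : 0 < C' := by positivity
  refine ⟨C', hC', fun n => ?_⟩
  match n with
  | 0 =>
    have h0 : (∫ t in Set.Ico (0 : ℝ) 1, t ^ 0 ∂μ) = (μ (Set.Ico (0:ℝ) 1)).toReal := by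
      simp [Measure.real]
    have hb : (μ (Set.Ico (0:ℝ) 1)).toReal ≤ C := by
      have := hcar 0 (Set.mem_Ico.mpr ⟨le_refl 0, by norm_num⟩)
      simpa using this
    rw [h0]
    have : ((0:ℕ):ℝ) + 1 = 1 := by norm_num
    rw [this, Real.one_rpow, mul_one]
    refine hb.trans ?_
    rw [hC'def]
    nlinarith [mul_pos hC h2s, mul_pos hC (mul_pos (mul_pos two_pos h3s) hΓ)]
  | 1 =>
    have h1 := part1 1 le_rfl
    have hB1 : (∫ t in Set.Ioo (0 : ℝ) 1, t ^ (1 - 1) * (1 - t) ^ s) = 1 / (1+s) := by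
      rw [aux_beta s hs 1 le_rfl]
      have e1 : ((1:ℕ):ℝ) + 1 + s = (1 + s) + 1 := by push_cast; ring
      rw [e1, Real.Gamma_add_one (by positivity)]
      simp [Real.Gamma_one]
      field_simp
    rw [hB1] at h1
    have hle : (∫ t in Set.Ico (0 : ℝ) 1, t ^ 1 ∂μ) ≤ C := by
      refine h1.trans ?_
      rw [div_eq_mul_inv, Nat.cast_one, mul_one, one_mul]
      have : (1+s)⁻¹ ≤ 1 := by
        rw [inv_le_one_iff₀]; right; linarith
      nlinarith
    refine hle.trans ?_
    have e2 : ((1:ℕ):ℝ) + 1 = 2 := by norm_num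
    rw [e2, Real.rpow_neg (by norm_num : (0:ℝ) ≤ 2), ← div_eq_mul_inv, le_div_iff₀ h2s]
    rw [hC'def]
    nlinarith [mul_pos hC h2s, mul_pos (mul_pos hC h2s) h2s,
      mul_pos hC (mul_pos (mul_pos two_pos h3s) hΓ)]
  | (m+2) =>
    set n : ℕ := m + 2 with hndef
    have hn1 : 1 ≤ n := by omega
    have hn2 : 2 ≤ n := by omega
    set x : ℝ := (n:ℝ) with hxdef
    have hx2 : (2:ℝ) ≤ x := by rw [hxdef]; exact_mod_cast hn2
    have hx1 : (0:ℝ) < x - 1 := by linarith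
    have h1 := part1 n hn1
    have htail := aux_tail s hs n hn2
    have hkey : x * ((x-1) ^ (-(1+s))) ≤ 2 * 3 ^ s * (x+1) ^ (-s) := by
      have hsplit : (x-1) ^ (-(1+s)) = (x-1)⁻¹ * (x-1) ^ (-s) := by
        rw [show -(1+s) = (-1) + (-s) by ring, Real.rpow_add hx1, Real.rpow_neg_one]
      have h3 : (x-1) ^ (-s) ≤ 3 ^ s * (x+1) ^ (-s) := by
        have hA : (0:ℝ) < (x-1) ^ s := Real.rpow_pos_of_pos hx1 s
        have hB : (0:ℝ) < (x+1) ^ s := Real.rpow_pos_of_pos (by linarith) s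
        have hAB : (x+1) ^ s ≤ 3 ^ s * (x-1) ^ s := by
          rw [← Real.mul_rpow (by norm_num) hx1.le]
          exact Real.rpow_le_rpow (by linarith) (by linarith) hs.le
        rw [Real.rpow_neg hx1.le, Real.rpow_neg (by linarith : (0:ℝ) ≤ x+1),
          ← one_div, show (3:ℝ) ^ s * ((x+1) ^ s)⁻¹ = 3 ^ s / (x+1) ^ s from
            (div_eq_mul_inv _ _).symm, div_le_div_iff₀ hA hB]
        linarith
      have h4 : x * (x-1)⁻¹ ≤ 2 := by
        rw [← div_eq_mul_inv, div_le_iff₀ hx1]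
        linarith
      calc x * ((x-1) ^ (-(1+s))) = (x * (x-1)⁻¹) * ((x-1) ^ (-s)) := by
            rw [hsplit]; ring
        _ ≤ 2 * (3 ^ s * (x+1) ^ (-s)) := by
            refine mul_le_mul h4 h3 (Real.rpow_nonneg hx1.le _) (by norm_num)
        _ = 2 * 3 ^ s * (x+1) ^ (-s) := by ring
    calc (∫ t in Set.Ico (0 : ℝ) 1, t ^ n ∂μ)
        ≤ C * x * ∫ t in Set.Ioo (0 : ℝ) 1, t ^ (n - 1) * (1 - t) ^ s := h1
      _ ≤ C * x * (Real.Gamma (1+s) * (x-1) ^ (-(1+s))) := by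
          refine mul_le_mul_of_nonneg_left htail (by positivity)
      _ = C * Real.Gamma (1+s) * (x * ((x-1) ^ (-(1+s)))) := by ring
      _ ≤ C * Real.Gamma (1+s) * (2 * 3 ^ s * (x+1) ^ (-s)) := by
          refine mul_le_mul_of_nonneg_left hkey (by positivity)
      _ ≤ C' * (x + 1) ^ (-s) := by
          have hx1p : (0:ℝ) ≤ (x+1) ^ (-s) := Real.rpow_nonneg (by linarith) _
          have : C * Real.Gamma (1+s) * (2 * 3 ^ s) ≤ C' := by
            rw [hC'def]; nlinarith
          nlinarith [mul_le_mul_of_nonneg_right this hx1p]
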